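/- The number of tuples (b,c,d,e,f) ∈ F^5 with f ≠ 0 satisfying (bc+df)² − 4(b²+cf)(c²−bd) = 0 equals q³·(q−1). -/

import Mathlib

open Finset

private lemma aux_d_count {F : Type*} [Field F] [Fintype F] [DecidableEq F]
    (hF : ringChar F ≠ 2) (h2 : (2 : F) ≠ 0) (b c f : F) (hf : f ≠ 0) :
    (((univ : Finset F).filter fun d : F =>
        (b * c + d * f) ^ 2 - 4 * (b ^ 2 + c * f) * (c ^ 2 - b * d) = 0).card : ℤ) =
      quadraticChar F (b ^ 2 + c * f) + 1 := by
  have h4 : (4 : F) ≠ 0 := by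
    have h : (4 : F) = 2 * 2 := by norm_num
    rw [h]; exact mul_ne_zero h2 h2
  have hA : (2 * f ^ 2 : F) ≠ 0 := mul_ne_zero h2 (pow_ne_zero _ hf)
  have key : ∀ d : F,
      (2 * f ^ 2 * d + (6 * b * c * f + 4 * b ^ 3)) ^ 2 - 16 * (b ^ 2 + c * f) ^ 3 =
        4 * f ^ 2 * ((b * c + d * f) ^ 2 - 4 * (b ^ 2 + c * f) * (c ^ 2 - b * d)) := by
    intro d; ring
  have hcard : ((univ : Finset F).filter fun d : F =>
        (b * c + d * f) ^ 2 - 4 * (b ^ 2 + c * f) * (c ^ 2 - b * d) = 0).card =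
      ((univ : Finset F).filter fun x : F => x ^ 2 = 16 * (b ^ 2 + c * f) ^ 3).card := by
    refine Finset.card_bij' (fun d _ => 2 * f ^ 2 * d + (6 * b * c * f + 4 * b ^ 3))
      (fun x _ => (x - (6 * b * c * f + 4 * b ^ 3)) / (2 * f ^ 2)) ?_ ?_ ?_ ?_
    · intro d hd
      simp only [mem_filter, mem_univ, true_and] at hd ⊢
      have h := key d
      rw [hd, mul_zero] at h
      exact sub_eq_zero.mp h
    · intro x hx
      simp only [mem_filter, mem_univ, true_and] at hx ⊢
      have h := key ((x - (6 * b * c * f + 4 * b ^ 3)) / (2 * f ^ 2))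
      have hx' : 2 * f ^ 2 * ((x - (6 * b * c * f + 4 * b ^ 3)) / (2 * f ^ 2)) +
          (6 * b * c * f + 4 * b ^ 3) = x := by field_simp; ring
      rw [hx', hx, sub_self] at h
      have h4f : (4 * f ^ 2 : F) ≠ 0 := mul_ne_zero h4 (pow_ne_zero _ hf)
      exact (mul_eq_zero.mp h.symm).resolve_left h4f
    · intro d _; field_simp; ring
    · intro x _; field_simp; ring
  rw [hcard]
  have hqc := quadraticChar_card_sqrts hF (16 * (b ^ 2 + c * f) ^ 3)
  have hset : ({x : F | x ^ 2 = 16 * (b ^ 2 + c * f) ^ 3}).toFinset =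
      (univ : Finset F).filter fun x : F => x ^ 2 = 16 * (b ^ 2 + c * f) ^ 3 := by
    ext x; simp
  rw [hset] at hqc
  rw [hqc]
  congr 1
  -- χ(16 t³) = χ(t)
  rcases eq_or_ne (b ^ 2 + c * f) 0 with ht | ht
  · rw [ht]; norm_num
  · have h4t : (4 * (b ^ 2 + c * f) : F) ≠ 0 := mul_ne_zero h4 ht
    have h16 : (16 * (b ^ 2 + c * f) ^ 3 : F) =
        (4 * (b ^ 2 + c * f)) ^ 2 * (b ^ 2 + c * f) := by ring
    rw [h16, map_mul, quadraticChar_sq_one' h4t, one_mul]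

private lemma aux_c_sum {F : Type*} [Field F] [Fintype F] [DecidableEq F]
    (hF : ringChar F ≠ 2) (b f : F) (hf : f ≠ 0) :
    ∑ c : F, quadraticChar F (b ^ 2 + c * f) = 0 := by
  have hbij : Function.Bijective fun c : F => b ^ 2 + c * f := by
    refine Finite.injective_iff_bijective.mp ?_
    intro x y hxy
    simp only at hxy
    exact mul_right_cancel₀ hf (add_left_cancel hxy)
  rw [Fintype.sum_bijective _ hbij _ (fun y => quadraticChar F y) fun c => rfl]
  exact quadraticChar_sum_zero hF

/-- The number of tuples `(b,c,d,e,f) ∈ F^5` with `f ≠ 0` satisfying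
`(bc+df)² − 4(b²+cf)(c²−bd) = 0` equals `q³·(q−1)`. -/
theorem count_discriminant_f_ne_zero (F : Type*) [Field F] [Fintype F]
    (q : ℕ) (hq : Fintype.card F = q) (hchar : 3 < ringChar F) :
    {v : F × F × F × F × F | v.2.2.2.2 ≠ 0 ∧
        (v.1 * v.2.1 + v.2.2.1 * v.2.2.2.2) ^ 2 -
          4 * (v.1 ^ 2 + v.2.1 * v.2.2.2.2) * (v.2.1 ^ 2 - v.1 * v.2.2.1) = 0}.ncard =
      q ^ 3 * (q - 1) := by
  classical
  have hF2 : ringChar F ≠ 2 := by omega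
  have h2 : (2 : F) ≠ 0 := by
    intro h
    have h' : ((2 : ℕ) : F) = 0 := by exact_mod_cast h
    rw [ringChar.spec] at h'
    have := Nat.le_of_dvd (by norm_num) h'
    omega
  have hq1 : 1 ≤ q := hq ▸ Fintype.card_pos
  have hsetfin : {v : F × F × F × F × F | v.2.2.2.2 ≠ 0 ∧
        (v.1 * v.2.1 + v.2.2.1 * v.2.2.2.2) ^ 2 -
          4 * (v.1 ^ 2 + v.2.1 * v.2.2.2.2) * (v.2.1 ^ 2 - v.1 * v.2.2.1) = 0} =
      ↑((univ : Finset (F × F × F × F × F)).filter fun v => v.2.2.2.2 ≠ 0 ∧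
        (v.1 * v.2.1 + v.2.2.1 * v.2.2.2.2) ^ 2 -
          4 * (v.1 ^ 2 + v.2.1 * v.2.2.2.2) * (v.2.1 ^ 2 - v.1 * v.2.2.1) = 0) := by
    ext v; simp
  rw [hsetfin, Set.ncard_coe_finset]
  suffices h : ((((univ : Finset (F × F × F × F × F)).filter fun v => v.2.2.2.2 ≠ 0 ∧
        (v.1 * v.2.1 + v.2.2.1 * v.2.2.2.2) ^ 2 -
          4 * (v.1 ^ 2 + v.2.1 * v.2.2.2.2) * (v.2.1 ^ 2 - v.1 * v.2.2.1) = 0).card : ℤ)) =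
      (q : ℤ) ^ 3 * ((q : ℤ) - 1) by
    have h' : ((q ^ 3 * (q - 1) : ℕ) : ℤ) = (q : ℤ) ^ 3 * ((q : ℤ) - 1) := by
      rw [Nat.cast_mul, Nat.cast_pow, Nat.cast_sub hq1, Nat.cast_one]
    exact_mod_cast h.trans h'.symm
  rw [Finset.card_filter]
  push_cast
  rw [Fintype.sum_prod_type]
  simp only [Fintype.sum_prod_type]
  -- now goal: ∑ b ∑ c ∑ d ∑ e ∑ f, ite ...
  have inner : ∀ b c f : F, (∑ d : F, if f ≠ 0 ∧
      (b * c + d * f) ^ 2 - 4 * (b ^ 2 + c * f) * (c ^ 2 - b * d) = 0 then (1 : ℤ) else 0) =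
      if f = 0 then 0 else quadraticChar F (b ^ 2 + c * f) + 1 := by
    intro b c f
    by_cases hf : f = 0
    · simp [hf]
    · simp only [hf, if_false, ne_eq, not_false_eq_true, true_and]
      rw [Finset.sum_boole]
      exact aux_d_count hF2 h2 b c f hf
  have inner2 : ∀ b f : F, (∑ c : F, if f = 0 then (0 : ℤ) else
      (quadraticChar F (b ^ 2 + c * f) : ℤ) + 1) = if f = 0 then 0 else (q : ℤ) := by
    intro b f
    by_cases hf : f = 0
    · simp [hf]
    · simp only [hf, if_false]
      rw [Finset.sum_add_distrib, Finset.sum_const]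
      have := aux_c_sum hF2 b f hf
      push_cast [this]
      simp [hq]
  have innerf : (∑ f : F, if f = 0 then (0 : ℤ) else (q : ℤ)) = ((q : ℤ) - 1) * q := by
    have hrw : ∀ f : F, (if f = 0 then (0 : ℤ) else (q : ℤ)) =
        (q : ℤ) - (if f = 0 then (q : ℤ) else 0) := by intro f; split <;> ring
    simp_rw [hrw]
    rw [Finset.sum_sub_distrib, Finset.sum_const, Finset.sum_ite_eq' univ (0 : F)]
    simp [hq]
    ring
  conv_lhs => enter [2, b, 2, c]; rw [Finset.sum_comm]; enter [2, e]; rw [Finset.sum_comm]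
  simp_rw [inner]
  conv_lhs => enter [2, b]; rw [Finset.sum_comm]; enter [2, e]; rw [Finset.sum_comm]
  simp_rw [inner2, innerf, Finset.sum_const]
  simp [hq]
  ring
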